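/- arXiv:1306.5663 — 2 statements merged into one kernel-verified Lean document; each statement's English description precedes it below -/
import Mathlib

section
/- Suppose complex-valued differentiable functions L, T, W, Y on an open interval I contained in (0,∞), with W nonvanishing on I, satisfy the system of ODEs: dL/dx = L/x + 2WLT/x + 2YL/(Wx) − Y/W, dT/dx = L/W − x/(2W) + νT/x, dW/dx = −2W²T/x + 2Y/x + νW/x, dY/dx = −νY/x + WL. Then the function x ↦ 2νL(x)/x − ν/2 + 2Y(x)L(x)/(W(x)x) − Y(x)/W(x) − 2W(x)L(x)T(x)/x has derivative identically zero on I, i.e. it is a constant of motion of the system. -/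
set_option maxHeartbeats 2000000 in


/-- The quantity
`2νL/x − ν/2 + 2YL/(Wx) − Y/W − 2WLT/x` is a constant of motion of the ODE
system arising from the Lax pair of the single-interval Bessel process. -/
theorem bessel_constant_of_motion
    (ν : ℝ) (hν : -1 < ν)
    (I : Set ℝ) (hI : IsOpen I) (hIpos : I ⊆ Set.Ioi (0 : ℝ))
    (L T W Y L' T' W' Y' : ℝ → ℂ)
    (hW : ∀ x ∈ I, W x ≠ 0)
    (hLd : ∀ x ∈ I, HasDerivAt L (L' x) x)
    (hTd : ∀ x ∈ I, HasDerivAt T (T' x) x)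
    (hWd : ∀ x ∈ I, HasDerivAt W (W' x) x)
    (hYd : ∀ x ∈ I, HasDerivAt Y (Y' x) x)
    (hLode : ∀ x ∈ I, L' x = L x / (x : ℂ) + 2 * W x * L x * T x / (x : ℂ)
      + 2 * Y x * L x / (W x * (x : ℂ)) - Y x / W x)
    (hTode : ∀ x ∈ I, T' x = L x / W x - (x : ℂ) / (2 * W x) + (ν : ℂ) * T x / (x : ℂ))
    (hWode : ∀ x ∈ I, W' x = -2 * (W x) ^ 2 * T x / (x : ℂ) + 2 * Y x / (x : ℂ)
      + (ν : ℂ) * W x / (x : ℂ))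
    (hYode : ∀ x ∈ I, Y' x = -(ν : ℂ) * Y x / (x : ℂ) + W x * L x) :
    ∀ x ∈ I, HasDerivAt (fun t : ℝ =>
      2 * (ν : ℂ) * L t / (t : ℂ) - (ν : ℂ) / 2 + 2 * Y t * L t / (W t * (t : ℂ))
        - Y t / W t - 2 * W t * L t * T t / (t : ℂ)) 0 x := by
  intro x hx
  have hxpos : (0 : ℝ) < x := hIpos hx
  have hx0 : ((x : ℝ) : ℂ) ≠ 0 := by
    exact_mod_cast Complex.ofReal_ne_zero.mpr (ne_of_gt hxpos)
  have hW0 : W x ≠ 0 := hW x hx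
  have hWx0 : W x * (x : ℂ) ≠ 0 := mul_ne_zero hW0 hx0
  have hxd : HasDerivAt (fun t : ℝ => (t : ℂ)) 1 x := by
    simpa using (hasDerivAt_id x).ofReal_comp
  have hL := hLd x hx
  have hT := hTd x hx
  have hWd' := hWd x hx
  have hY := hYd x hx
  have h1 : HasDerivAt (fun t : ℝ => 2 * (ν : ℂ) * L t / (t : ℂ))
      ((2 * (ν : ℂ) * L' x * (x : ℂ) - 2 * (ν : ℂ) * L x * 1) / (x : ℂ) ^ 2) x :=
    (hL.const_mul (2 * (ν : ℂ))).div hxd hx0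
  have h3 : HasDerivAt (fun t : ℝ => 2 * Y t * L t / (W t * (t : ℂ)))
      (((2 * Y' x * L x + 2 * Y x * L' x) * (W x * (x : ℂ))
        - 2 * Y x * L x * (W' x * (x : ℂ) + W x * 1)) / (W x * (x : ℂ)) ^ 2) x :=
    ((hY.const_mul 2).mul hL).div (hWd'.mul hxd) hWx0
  have h4 : HasDerivAt (fun t : ℝ => Y t / W t)
      ((Y' x * W x - Y x * W' x) / W x ^ 2) x := hY.div hWd' hW0
  have h5 : HasDerivAt (fun t : ℝ => 2 * W t * L t * T t / (t : ℂ))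
      ((((2 * W' x * L x + 2 * W x * L' x) * T x + 2 * W x * L x * T' x) * (x : ℂ)
        - 2 * W x * L x * T x * 1) / (x : ℂ) ^ 2) x :=
    (((hWd'.const_mul 2).mul hL).mul hT).div hxd hx0
  have hfull := (((h1.sub_const ((ν : ℂ) / 2)).add h3).sub h4).sub h5
  convert hfull using 1
  · rfl
  · rfl
  have eL : L' x = (L x * W x + 2 * W x ^ 2 * L x * T x + 2 * Y x * L x - Y x * (x : ℂ))
      / (W x * (x : ℂ)) := by
    rw [hLode x hx]; field_simp
  have eT : T' x = (2 * L x * (x : ℂ) - (x : ℂ) ^ 2 + 2 * (ν : ℂ) * W x * T x)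
      / (2 * W x * (x : ℂ)) := by
    rw [hTode x hx]; field_simp
  have eW : W' x = (-2 * W x ^ 2 * T x + 2 * Y x + (ν : ℂ) * W x) / (x : ℂ) := by
    rw [hWode x hx]; field_simp
  have eY : Y' x = (-(ν : ℂ) * Y x + (x : ℂ) * W x * L x) / (x : ℂ) := by
    rw [hYode x hx]; field_simp
  rw [eL, eT, eW, eY]
  field_simp
  ring_nf
end

section
/- Let ν ∈ ℝ with ν > −1 and a₁ > 0. Let γ : ℝ → ℂ be a continuously differentiable curve such that: |γ'(u)| ≤ M for all u; γ(u) ∉ (−∞, 0] for all u; |γ(u)| ≥ r > 0 for all u; Re γ(u) ≤ −c|u| + C for all u, with constants c > 0 and C; and inf_{u,v ∈ ℝ} |γ(u) − 1/γ(v)| ≥ d > 0. Then the double integral ∬_{ℝ×ℝ} | γ(u)^{−ν} · exp( a₁γ(u)/2 − 1/(4γ(u)) ) / ( γ(u) − 1/γ(v) ) |² · |γ'(u)| · |γ'(v)|/|γ(v)|² du dv is finite, where z^{−ν} := exp(−ν Log z) with the principal logarithm. -/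
open MeasureTheory

private lemma integrable_exp_neg_mul_abs' {b : ℝ} (hb : 0 < b) :
    Integrable (fun u : ℝ => Real.exp (-b * |u|)) := by
  have hIoi : IntegrableOn (fun u : ℝ => Real.exp (-b * |u|)) (Set.Ioi 0) := by
    refine (exp_neg_integrableOn_Ioi 0 hb).congr_fun (fun x hx => ?_) measurableSet_Ioi
    rw [abs_of_pos hx]
  have hIic : IntegrableOn (fun u : ℝ => Real.exp (-b * |u|)) (Set.Iic 0) := by
    rw [← Measure.map_neg_eq_self (volume : Measure ℝ)]
    have m : MeasurableEmbedding fun x : ℝ => -x := (Homeomorph.neg ℝ).measurableEmbedding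
    rw [m.integrableOn_map_iff]
    simp_rw [Function.comp_def, abs_neg, Set.neg_preimage, Set.neg_Iic, neg_zero]
    exact (integrableOn_Ici_iff_integrableOn_Ioi).mpr hIoi
  have := hIic.union hIoi
  rwa [Set.Iic_union_Ioi, integrableOn_univ] at this

set_option maxHeartbeats 1000000 in
/-- square-integrability (Hilbert–Schmidt property) of the kernel
`𝒜(t,s) = (2πi)⁻¹ t^{−ν} e^{a₁t/2 − 1/(4t)}(t−s)⁻¹` along the parametrized
contours `t = γ(u)`, `s = 1/γ(v)`. -/
theorem besselA_kernel_square_integrable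
    (ν a₁ : ℝ) (hν : -1 < ν) (ha₁ : 0 < a₁)
    (γ : ℝ → ℂ) (hγ : ContDiff ℝ 1 γ)
    (M : ℝ) (hM : ∀ u : ℝ, ‖deriv γ u‖ ≤ M)
    (hcut : ∀ u : ℝ, γ u ∉ Complex.ofReal '' Set.Iic (0 : ℝ))
    (r : ℝ) (hr : 0 < r) (hlow : ∀ u : ℝ, r ≤ ‖γ u‖)
    (c C : ℝ) (hc : 0 < c) (hre : ∀ u : ℝ, (γ u).re ≤ -c * |u| + C)
    (d : ℝ) (hd : 0 < d) (hsep : ∀ u v : ℝ, d ≤ ‖γ u - (γ v)⁻¹‖) :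
    Integrable (fun p : ℝ × ℝ =>
      ‖Complex.exp (-(ν : ℂ) * Complex.log (γ p.1)) *
          Complex.exp ((a₁ : ℂ) * γ p.1 / 2 - 1 / (4 * γ p.1)) /
          (γ p.1 - (γ p.2)⁻¹)‖ ^ 2
        * ‖deriv γ p.1‖ * (‖deriv γ p.2‖ / ‖γ p.2‖ ^ 2))
      (volume : Measure (ℝ × ℝ)) := by
  have hM0 : 0 ≤ M := (norm_nonneg _).trans (hM 0)
  set R : ℝ := ‖γ 0‖ with hR
  have hR0 : 0 ≤ R := norm_nonneg _
  set β : ℝ := a₁ * c / 4 with hβ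
  have hβ0 : 0 < β := by positivity
  set ε : ℝ := a₁ * c / (4 * (|ν| + 1) * (M + 1)) with hε
  have hε0 : 0 < ε := by positivity
  set K : ℝ := |ν| * (|Real.log r| + |Real.log ε| + ε * R) + a₁ * C / 2 + 1 / (4 * r) with hK
  -- Lipschitz upper bound on ‖γ u‖
  have hup : ∀ u : ℝ, ‖γ u‖ ≤ R + M * |u| := by
    intro u
    have hlip := Convex.norm_image_sub_le_of_norm_deriv_le
      (f := γ) (fun x _ => (hγ.differentiable one_ne_zero).differentiableAt)
      (fun x _ => hM x) convex_univ (Set.mem_univ 0) (Set.mem_univ u)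
    have h2 := norm_sub_norm_le (γ u) (γ 0)
    simp only [sub_zero, Real.norm_eq_abs] at hlip
    linarith
  -- bound on the numerator norm
  have hnum : ∀ u : ℝ,
      ‖Complex.exp (-(ν : ℂ) * Complex.log (γ u)) *
        Complex.exp ((a₁ : ℂ) * γ u / 2 - 1 / (4 * γ u))‖ ≤ Real.exp (K - β * |u|) := by
    intro u
    have hgu : (0:ℝ) < ‖γ u‖ := lt_of_lt_of_le hr (hlow u)
    rw [norm_mul, Complex.norm_exp, Complex.norm_exp,
      ← Real.exp_add]
    apply Real.exp_le_exp.mpr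
    -- compute real parts
    have e1 : (-(ν : ℂ) * Complex.log (γ u)).re = -ν * Real.log ‖γ u‖ := by
      have : -(ν:ℂ) = ((-ν : ℝ) : ℂ) := by push_cast; ring
      rw [this, Complex.re_ofReal_mul, Complex.log_re]
    have e2 : ((a₁ : ℂ) * γ u / 2 - 1 / (4 * γ u)).re
        = (a₁ / 2) * (γ u).re - ((4 * γ u)⁻¹).re := by
      have h21 : (a₁ : ℂ) * γ u / 2 = ((a₁ / 2 : ℝ) : ℂ) * γ u := by push_cast; ring
      rw [Complex.sub_re, h21, Complex.re_ofReal_mul, one_div]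
    rw [e1, e2]
    set L : ℝ := Real.log ‖γ u‖ with hL
    have hL1 : Real.log r ≤ L := Real.log_le_log hr (hlow u)
    have hx0 : (0:ℝ) < R + M * |u| := lt_of_lt_of_le hr ((hlow u).trans (hup u))
    have hL2 : L ≤ ε * (R + M * |u|) - Real.log ε := by
      have h1 : L ≤ Real.log (R + M * |u|) := Real.log_le_log hgu (hup u)
      have h2 : Real.log (ε * (R + M * |u|)) ≤ ε * (R + M * |u|) - 1 :=
        Real.log_le_sub_one_of_pos (by positivity)
      rw [Real.log_mul (ne_of_gt hε0) (ne_of_gt hx0)] at h2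
      linarith
    have habsL : |L| ≤ |Real.log r| + |Real.log ε| + ε * R + ε * M * |u| := by
      rw [abs_le]
      constructor
      · have := neg_abs_le (Real.log r)
        nlinarith [abs_nonneg (Real.log ε), abs_nonneg u, mul_nonneg (mul_nonneg hε0.le hM0) (abs_nonneg u), mul_nonneg hε0.le hR0]
      · have := le_abs_self (Real.log ε)
        have := neg_abs_le (Real.log ε)
        nlinarith [abs_nonneg (Real.log r)]
    have ht1 : -ν * L ≤ |ν| * (|Real.log r| + |Real.log ε| + ε * R) + |ν| * (ε * M * |u|) := by
      calc -ν * L ≤ |(-ν) * L| := le_abs_self _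
        _ = |ν| * |L| := by rw [abs_mul, abs_neg]
        _ ≤ |ν| * (|Real.log r| + |Real.log ε| + ε * R + ε * M * |u|) :=
            mul_le_mul_of_nonneg_left habsL (abs_nonneg ν)
        _ = _ := by ring
    have hεβ : |ν| * (ε * M) ≤ β := by
      have hne1 : |ν| + 1 ≠ 0 := by positivity
      have hne2 : M + 1 ≠ 0 := by positivity
      have he : (|ν| + 1) * (M + 1) * ε = β := by
        rw [hε, hβ]; field_simp
      rw [← he]
      nlinarith [mul_nonneg hε0.le (abs_nonneg ν), mul_nonneg hε0.le hM0, hε0.le]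
    have ht2 : (a₁ / 2) * (γ u).re ≤ -2 * β * |u| + a₁ * C / 2 := by
      have h := mul_le_mul_of_nonneg_left (hre u) (by positivity : (0:ℝ) ≤ a₁ / 2)
      have he : (a₁ / 2) * (-c * |u| + C) = -2 * β * |u| + a₁ * C / 2 := by rw [hβ]; ring
      linarith
    have ht3 : -((4 * γ u)⁻¹).re ≤ 1 / (4 * r) := by
      have h1 : |((4 * γ u)⁻¹).re| ≤ ‖(4 * γ u)⁻¹‖ := Complex.abs_re_le_norm _
      have h2 : ‖(4 * γ u)⁻¹‖ = (4 * ‖γ u‖)⁻¹ := by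
        rw [norm_inv, norm_mul]
        norm_num
      have h3 : (4 * ‖γ u‖)⁻¹ ≤ (4 * r)⁻¹ := by
        apply inv_anti₀ (by positivity)
        linarith [hlow u]
      have h4 := neg_abs_le ((4 * γ u)⁻¹).re
      rw [h2] at h1
      rw [one_div]
      linarith
    have hνεMu : |ν| * (ε * M * |u|) ≤ β * |u| := by
      have h := mul_le_mul_of_nonneg_right hεβ (abs_nonneg u)
      calc |ν| * (ε * M * |u|) = |ν| * (ε * M) * |u| := by ring
        _ ≤ β * |u| := h
    rw [hK]
    linarith
  -- lower bound ‖γ v‖ ≥ α (1 + |v|)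
  set v₀ : ℝ := max 0 (2 * (C + r) / c) with hv₀
  have hv₀0 : 0 ≤ v₀ := le_max_left _ _
  set α : ℝ := min (r / (1 + v₀)) (min r (c / 2) / 2) with hα
  have hα0 : 0 < α := by
    apply lt_min
    · positivity
    · positivity
  have hγα : ∀ v : ℝ, α * (1 + |v|) ≤ ‖γ v‖ := by
    intro v
    rcases le_or_gt (|v|) v₀ with h | h
    · have h1 : α ≤ r / (1 + v₀) := min_le_left _ _
      have h2 : α * (1 + |v|) ≤ (r / (1 + v₀)) * (1 + v₀) := by
        apply mul_le_mul h1 (by linarith) (by positivity) (by positivity)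
      rw [div_mul_cancel₀] at h2
      · exact h2.trans (hlow v)
      · positivity
    · have hRe : -‖γ v‖ ≤ (γ v).re := by
        have := Complex.abs_re_le_norm (γ v)
        cases abs_le.mp this; linarith
      have h1 : c * |v| - C ≤ ‖γ v‖ := by
        have := hre v; linarith
      have h2 : 2 * (C + r) / c ≤ v₀ := le_max_right _ _
      have h3 : C + r ≤ c * v₀ / 2 := by
        rw [div_le_iff₀ hc] at h2; nlinarith
      have h4 : r + c * |v| / 2 ≤ ‖γ v‖ := by nlinarith
      have h5 : α ≤ min r (c / 2) / 2 := min_le_right _ _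
      have h6 : min r (c / 2) ≤ r := min_le_left _ _
      have h7 : min r (c / 2) ≤ c / 2 := min_le_right _ _
      nlinarith [abs_nonneg v]
  have hγα2 : ∀ v : ℝ, α ^ 2 * (1 + v ^ 2) ≤ ‖γ v‖ ^ 2 := by
    intro v
    have h := hγα v
    have h2 : (α * (1 + |v|)) * (α * (1 + |v|)) ≤ ‖γ v‖ * ‖γ v‖ :=
      mul_self_le_mul_self (by positivity) h
    nlinarith [sq_abs v, abs_nonneg v, sq_nonneg α, mul_nonneg (mul_nonneg hα0.le hα0.le) (abs_nonneg v)]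
  -- the dominating product function
  set F : ℝ → ℝ := fun u => Real.exp (K - β * |u|) ^ 2 / d ^ 2 * M with hF
  set G : ℝ → ℝ := fun v => M / (α ^ 2 * (1 + v ^ 2)) with hG
  have hFint : Integrable F := by
    have h1 : Integrable (fun u : ℝ =>
        Real.exp (2 * K) * Real.exp (-(2 * β) * |u|) * (M / d ^ 2)) :=
      ((integrable_exp_neg_mul_abs' (by positivity)).const_mul _).mul_const _
    refine h1.congr (Filter.Eventually.of_forall fun u => ?_)
    rw [hF]
    simp only
    have he : Real.exp (K - β * |u|) ^ 2 = Real.exp (2 * K) * Real.exp (-(2 * β) * |u|) := by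
      rw [sq, ← Real.exp_add, ← Real.exp_add]
      congr 1
      ring
    rw [he]
    ring
  have hGint : Integrable G := by
    have h1 : Integrable (fun v : ℝ => (M / α ^ 2) * (1 + v ^ 2)⁻¹) :=
      integrable_inv_one_add_sq.const_mul _
    refine h1.congr (Filter.Eventually.of_forall fun v => ?_)
    rw [hG]
    simp only
    field_simp
  have hH : Integrable (fun p : ℝ × ℝ => F p.1 * G p.2) (volume : Measure (ℝ × ℝ)) := by
    rw [Measure.volume_eq_prod]
    exact hFint.mul_prod hGint
  -- measurability
  have hγc : Continuous γ := hγ.continuous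
  have hγ'c : Continuous (deriv γ) := hγ.continuous_deriv le_rfl
  have hmeas : AEStronglyMeasurable (fun p : ℝ × ℝ =>
      ‖Complex.exp (-(ν : ℂ) * Complex.log (γ p.1)) *
          Complex.exp ((a₁ : ℂ) * γ p.1 / 2 - 1 / (4 * γ p.1)) /
          (γ p.1 - (γ p.2)⁻¹)‖ ^ 2
        * ‖deriv γ p.1‖ * (‖deriv γ p.2‖ / ‖γ p.2‖ ^ 2)) (volume : Measure (ℝ × ℝ)) := by
    apply Measurable.aestronglyMeasurable
    have m1 : Measurable fun p : ℝ × ℝ => γ p.1 := hγc.measurable.comp measurable_fst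
    have m2 : Measurable fun p : ℝ × ℝ => γ p.2 := hγc.measurable.comp measurable_snd
    have m3 : Measurable fun p : ℝ × ℝ => deriv γ p.1 := hγ'c.measurable.comp measurable_fst
    have m4 : Measurable fun p : ℝ × ℝ => deriv γ p.2 := hγ'c.measurable.comp measurable_snd
    apply Measurable.mul
    apply Measurable.mul
    · apply Measurable.pow_const
      apply Measurable.norm
      apply Measurable.div
      · exact ((Complex.measurable_exp.comp ((Complex.measurable_log.comp m1).const_mul _)).mul
          (Complex.measurable_exp.comp (((m1.const_mul _).div_const _).sub
            (Measurable.const_div (m1.const_mul _) _))))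
      · exact m1.sub m2.inv
    · exact m3.norm
    · exact m4.norm.div (m2.norm.pow_const _)
  -- conclude by domination
  refine hH.mono' hmeas (Filter.Eventually.of_forall fun p => ?_)
  have hfnn : (0:ℝ) ≤ ‖Complex.exp (-(ν : ℂ) * Complex.log (γ p.1)) *
          Complex.exp ((a₁ : ℂ) * γ p.1 / 2 - 1 / (4 * γ p.1)) /
          (γ p.1 - (γ p.2)⁻¹)‖ ^ 2
        * ‖deriv γ p.1‖ * (‖deriv γ p.2‖ / ‖γ p.2‖ ^ 2) := by positivity
  rw [Real.norm_eq_abs, abs_of_nonneg hfnn]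
  rw [norm_div, div_pow, hF, hG]
  simp only
  have hden : d ^ 2 ≤ ‖γ p.1 - (γ p.2)⁻¹‖ ^ 2 := by
    have := hsep p.1 p.2
    nlinarith [hd.le]
  have hnum2 : ‖Complex.exp (-(ν : ℂ) * Complex.log (γ p.1)) *
      Complex.exp ((a₁ : ℂ) * γ p.1 / 2 - 1 / (4 * γ p.1))‖ ^ 2
      ≤ Real.exp (K - β * |p.1|) ^ 2 := by
    have := hnum p.1
    nlinarith [norm_nonneg (Complex.exp (-(ν : ℂ) * Complex.log (γ p.1)) *
      Complex.exp ((a₁ : ℂ) * γ p.1 / 2 - 1 / (4 * γ p.1)))]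
  have hd2 : (0:ℝ) < d ^ 2 := by positivity
  have hα2 : (0:ℝ) < α ^ 2 * (1 + p.2 ^ 2) := by positivity
  have step1 : ‖Complex.exp (-(ν : ℂ) * Complex.log (γ p.1)) *
      Complex.exp ((a₁ : ℂ) * γ p.1 / 2 - 1 / (4 * γ p.1))‖ ^ 2 /
      ‖γ p.1 - (γ p.2)⁻¹‖ ^ 2 ≤ Real.exp (K - β * |p.1|) ^ 2 / d ^ 2 :=
    div_le_div₀ (by positivity) hnum2 hd2 hden
  have step2 : ‖deriv γ p.2‖ / ‖γ p.2‖ ^ 2 ≤ M / (α ^ 2 * (1 + p.2 ^ 2)) :=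
    div_le_div₀ hM0 (hM p.2) hα2 (hγα2 p.2)
  calc ‖Complex.exp (-(ν : ℂ) * Complex.log (γ p.1)) *
          Complex.exp ((a₁ : ℂ) * γ p.1 / 2 - 1 / (4 * γ p.1))‖ ^ 2 /
          ‖γ p.1 - (γ p.2)⁻¹‖ ^ 2 * ‖deriv γ p.1‖ * (‖deriv γ p.2‖ / ‖γ p.2‖ ^ 2)
      ≤ Real.exp (K - β * |p.1|) ^ 2 / d ^ 2 * M * (M / (α ^ 2 * (1 + p.2 ^ 2))) := by
        apply mul_le_mul
        · exact mul_le_mul step1 (hM p.1) (norm_nonneg _) (by positivity)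
        · exact step2
        · positivity
        · positivity
    _ = _ := rfl
end
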